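/- arXiv:2502.12615 — 3 statements merged into one kernel-verified Lean document; each statement's English description precedes it below -/
import Mathlib

section
/- For every integer k ≥ 2 and every n ≥ 0, A_{k, n⊖1} − α_k·A_{k,n} = Σ_r c(r)·(r^{−1} − α_k)·r^n, where the sum ranges over the k distinct complex roots r of Q_k(X) = X^k − X^{k−1} − 1, c(r) = r^k / (k·r − (k−1)), and ⊖ is truncated subtraction on ℕ. (The term corresponding to r = β_k vanishes since β_k^{−1} = α_k.) -/
/-- The Fibonacci-like sequence `A_{k,p}` : `A k p = p+1` for `p < k`,
and `A k p = A k (p-1) + A k (p-k)` for `p ≥ k`.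
(The `max k 1` only makes termination evident; in all statements `k ≥ 1`.) -/
def A (k : ℕ) : ℕ → ℕ
  | 0 => 1
  | p + 1 => if p + 1 < k then p + 2 else A k p + A k (p + 1 - max k 1)
termination_by p => p
decreasing_by all_goals omega

open Polynomial

/-- The polynomial `Q_k(X) = X^k - X^{k-1} - 1` over `ℂ`. -/
noncomputable def Q (k : ℕ) : Polynomial ℂ := X ^ k - X ^ (k - 1) - 1

open Finset

/- ### Auxiliary lemmas -/

lemma A_small (k p : ℕ) (h : p < k) : A k p = p + 1 := by
  cases p with
  | zero => rw [A]
  | succ q => rw [A, if_pos h]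

lemma A_zero (k : ℕ) : A k 0 = 1 := by rw [A]

lemma A_rec (k p : ℕ) (hk : 1 ≤ k) (h : k ≤ p) : A k p = A k (p - 1) + A k (p - k) := by
  obtain ⟨q, rfl⟩ : ∃ q, p = q + 1 := ⟨p - 1, by omega⟩
  rw [A, if_neg (by omega), max_eq_left hk]
  simp

lemma Q_monic (k : ℕ) (hk : 2 ≤ k) : (Q k).Monic := by
  unfold Q; monicity!
  have h0 : k ≠ 0 := by omega
  have h1 : k ≠ k - 1 := by omega
  simp [h0, h1]; rfl

lemma Q_natDegree (k : ℕ) (hk : 2 ≤ k) : (Q k).natDegree = k := by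
  unfold Q; compute_degree!
  have h0 : k ≠ 0 := by omega
  have h1 : k ≠ k - 1 := by omega
  simp [h0, h1]

lemma Q_deriv (k : ℕ) (hk : 2 ≤ k) :
    derivative (Q k) = C (k : ℂ) * X ^ (k-1) - C ((k:ℂ) - 1) * X ^ (k-2) := by
  unfold Q
  rw [derivative_sub, derivative_sub, derivative_one, derivative_X_pow, derivative_X_pow]
  have h1 : k - 1 - 1 = k - 2 := by omega
  have h2 : ((k : ℂ) - 1) = ((k - 1 : ℕ) : ℂ) := by
    push_cast [Nat.cast_sub (by omega : 1 ≤ k)]; ring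
  rw [h1, h2]; ring

lemma Q_eval (k : ℕ) (r : ℂ) : eval r (Q k) = r ^ k - r ^ (k-1) - 1 := by
  simp [Q]

lemma Q_root_ne_zero (k : ℕ) (hk : 2 ≤ k) (r : ℂ) (hr : eval r (Q k) = 0) : r ≠ 0 := by
  rintro rfl
  rw [Q_eval] at hr
  rw [zero_pow (by omega : k ≠ 0), zero_pow (by omega : k - 1 ≠ 0)] at hr
  norm_num at hr

lemma Q_root_den_ne_zero (k : ℕ) (hk : 2 ≤ k) (r : ℂ) (hr : eval r (Q k) = 0) :
    (k : ℂ) * r - ((k : ℂ) - 1) ≠ 0 := by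
  intro h
  have hk0 : (k : ℂ) ≠ 0 := by exact_mod_cast (by omega : k ≠ 0)
  have hrr : r = ((k - 1 : ℝ) / k : ℝ) := by
    push_cast
    field_simp
    linear_combination h
  set x : ℝ := (k - 1 : ℝ) / k with hx
  rw [Q_eval, hrr] at hr
  have hxr : (x : ℝ) ^ k - x ^ (k-1) - 1 = 0 := by
    exact_mod_cast hr
  have hx0 : 0 ≤ x := by
    apply div_nonneg <;> [skip; positivity]
    simp [Nat.one_le_cast.mpr (by omega : 1 ≤ k)]
  have hx1 : x ≤ 1 := by
    rw [div_le_one (by positivity)]; linarith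
  have := pow_le_pow_of_le_one hx0 hx1 (by omega : k - 1 ≤ k)
  nlinarith [pow_nonneg hx0 (k-1)]

lemma Q_roots_nodup (k : ℕ) (hk : 2 ≤ k) : (Q k).roots.Nodup := by
  rw [Multiset.nodup_iff_count_le_one]
  intro r
  rw [count_roots]
  by_contra h
  push_neg at h
  have h2 := (one_lt_rootMultiplicity_iff_isRoot (Q_monic k hk).ne_zero).mp h
  obtain ⟨h0, h1⟩ := h2
  have hr0 := Q_root_ne_zero k hk r h0
  have hden := Q_root_den_ne_zero k hk r h0
  rw [IsRoot, Q_deriv k hk] at h1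
  simp only [eval_sub, eval_mul, eval_C, eval_pow, eval_X] at h1
  apply hden
  have hpow : r ^ (k-1) = r ^ (k-2) * r := by
    rw [← pow_succ]; congr 1; omega
  have h2 : r ^ (k-2) * ((k:ℂ) * r - ((k:ℂ) - 1)) = 0 := by
    rw [hpow] at h1; ring_nf; ring_nf at h1; linear_combination h1
  rcases mul_eq_zero.mp h2 with h3 | h3
  · exact absurd h3 (pow_ne_zero _ hr0)
  · exact h3

lemma Q_card_roots (k : ℕ) (hk : 2 ≤ k) : Multiset.card (Q k).roots = k := by
  have := (IsAlgClosed.splits (Q k)).natDegree_eq_card_roots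
  rw [Q_natDegree k hk] at this
  exact this.symm

lemma Q_toFinset_card (k : ℕ) (hk : 2 ≤ k) : (Q k).roots.toFinset.card = k := by
  rw [Multiset.toFinset_card_of_nodup (Q_roots_nodup k hk), Q_card_roots k hk]

lemma Q_eq_nodal (k : ℕ) (hk : 2 ≤ k) :
    Q k = Lagrange.nodal (Q k).roots.toFinset id := by
  have h := (IsAlgClosed.splits (Q k)).eq_prod_roots_of_monic (Q_monic k hk)
  have hval : (Q k).roots.toFinset.val = (Q k).roots := by
    rw [Multiset.toFinset_val, Multiset.dedup_eq_self.mpr (Q_roots_nodup k hk)]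
  rw [Lagrange.nodal_eq]
  conv_lhs => rw [h]
  rw [show (∏ i ∈ (Q k).roots.toFinset, (X - C (id i))) =
      (Multiset.map (fun i => X - C (id i)) (Q k).roots.toFinset.val).prod from rfl, hval]
  simp

lemma Q_deriv_eval (k : ℕ) (hk : 2 ≤ k) (r : ℂ) (hr : r ∈ (Q k).roots.toFinset) :
    ∏ s ∈ (Q k).roots.toFinset.erase r, (r - s)
      = r ^ (k-2) * ((k:ℂ) * r - ((k:ℂ) - 1)) := by
  have h1 := Lagrange.eval_nodal_derivative_eval_node_eq (v := id) (i := r) hr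
  rw [← Q_eq_nodal k hk] at h1
  simp only [id] at h1
  rw [Lagrange.eval_nodal] at h1
  simp only [id] at h1
  rw [← h1, Q_deriv k hk]
  simp only [eval_sub, eval_mul, eval_C, eval_pow, eval_X]
  have hpow : r ^ (k-1) = r ^ (k-2) * r := by
    rw [← pow_succ]; congr 1; omega
  rw [hpow]; ring

lemma basis_coeff (s : Finset ℂ) (r : ℂ) (hr : r ∈ s) :
    (Lagrange.basis s id r).coeff (s.card - 1) = (∏ t ∈ s.erase r, (r - t))⁻¹ := by
  rw [Lagrange.basis_eq_prod_sub_inv_mul_nodal_div hr,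
    ← Lagrange.nodal_erase_eq_nodal_div hr, coeff_C_mul]
  have hdeg : (Lagrange.nodal (s.erase r) id).natDegree = s.card - 1 := by
    rw [Lagrange.natDegree_nodal, card_erase_of_mem hr]
  rw [← hdeg, (Lagrange.nodal_monic).coeff_natDegree, mul_one,
    Lagrange.nodalWeight, ← prod_inv_distrib]
  simp

lemma lagrange_sum (s : Finset ℂ) (j : ℕ) (hj : j < s.card) :
    ∑ r ∈ s, r ^ j * (∏ t ∈ s.erase r, (r - t))⁻¹
      = if j = s.card - 1 then 1 else 0 := by
  have hinj : Set.InjOn id (s : Set ℂ) := Set.injOn_id _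
  have hX : (X : ℂ[X]) ^ j = Lagrange.interpolate s id fun r => r ^ j := by
    have := Lagrange.eq_interpolate (f := (X : ℂ[X]) ^ j) hinj
      (by rw [degree_X_pow]; exact_mod_cast hj)
    simpa using this
  have := congrArg (fun p => p.coeff (s.card - 1)) hX
  simp only [Lagrange.interpolate_apply, finset_sum_coeff, coeff_C_mul, coeff_X_pow] at this
  rw [Finset.sum_congr rfl (fun r hr => by rw [basis_coeff s r hr])] at this
  rw [← this]
  rcases eq_or_ne j (s.card - 1) with h | h
  · simp [h]
  · simp [h, Ne.symm h]

/-- The residue sums `T k j = Σ_r r^j / Q_k'(r)`. -/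
noncomputable def T (k j : ℕ) : ℂ :=
  ∑ r ∈ (Q k).roots.toFinset, r ^ j * (r ^ (k-2) * ((k:ℂ) * r - ((k:ℂ) - 1)))⁻¹

/-- The limit sequence. -/
noncomputable def B (k j : ℕ) : ℂ :=
  if j + 1 < k then 0 else if j + 2 < 2*k then 1 else (A k (j + 2 - 2*k) : ℂ)

lemma B_rec (k : ℕ) (hk : 2 ≤ k) (m : ℕ) :
    B k (m + k) = B k (m + (k-1)) + B k m := by
  have e1 : ¬ (m + k + 1 < k) := by omega
  have e2 : ¬ (m + (k-1) + 1 < k) := by omega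
  unfold B
  rw [if_neg e1, if_neg e2]
  rcases (by omega : m+2 < k ∨ m+2 = k ∨ m+1 = k ∨ (k ≤ m ∧ m+2 < 2*k) ∨ 2*k ≤ m+2)
    with h | h | h | ⟨h1, h2⟩ | h
  · rw [if_pos (by omega : m + k + 2 < 2*k), if_pos (by omega : m + (k-1) + 2 < 2*k),
      if_pos (by omega : m + 1 < k)]
    ring
  · rw [if_neg (by omega : ¬ (m + k + 2 < 2*k)), if_pos (by omega : m + (k-1) + 2 < 2*k),
      if_pos (by omega : m + 1 < k)]
    rw [show m + k + 2 - 2*k = 0 by omega, A_zero k]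
    norm_num
  · rw [if_neg (by omega : ¬ (m + k + 2 < 2*k)), if_neg (by omega : ¬ (m + (k-1) + 2 < 2*k)),
      if_neg (by omega : ¬ (m + 1 < k)), if_pos (by omega : m + 2 < 2*k)]
    rw [show m + k + 2 - 2*k = 1 by omega, show m + (k-1) + 2 - 2*k = 0 by omega,
      A_small k 1 (by omega), A_zero k]
    norm_num
  · rw [if_neg (by omega : ¬ (m + k + 2 < 2*k)), if_neg (by omega : ¬ (m + (k-1) + 2 < 2*k)),
      if_neg (by omega : ¬ (m + 1 < k)), if_pos (by omega : m + 2 < 2*k)]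
    rw [A_small k _ (by omega : m + k + 2 - 2*k < k),
      A_small k _ (by omega : m + (k-1) + 2 - 2*k < k)]
    have : m + k + 2 - 2*k = (m + (k-1) + 2 - 2*k) + 1 := by omega
    rw [this]; push_cast; ring
  · rw [if_neg (by omega : ¬ (m + k + 2 < 2*k)), if_neg (by omega : ¬ (m + (k-1) + 2 < 2*k)),
      if_neg (by omega : ¬ (m + 1 < k)), if_neg (by omega : ¬ (m + 2 < 2*k))]
    rw [A_rec k (m + k + 2 - 2*k) (by omega) (by omega)]
    rw [show m + k + 2 - 2*k - 1 = m + (k-1) + 2 - 2*k by omega,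
      show m + k + 2 - 2*k - k = m + 2 - 2*k by omega]
    push_cast; ring

lemma T_base (k : ℕ) (hk : 2 ≤ k) (j : ℕ) (hj : j < k) : T k j = B k j := by
  unfold T
  rw [Finset.sum_congr rfl (fun r hr => by
    rw [← Q_deriv_eval k hk r hr]),
    lagrange_sum _ j (by rw [Q_toFinset_card k hk]; exact hj), Q_toFinset_card k hk]
  unfold B
  rcases eq_or_ne j (k-1) with h | h
  · rw [if_pos h, if_neg (by omega), if_pos (by omega)]
  · rw [if_neg h, if_pos (by omega)]

lemma T_rec (k : ℕ) (hk : 2 ≤ k) (m : ℕ) :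
    T k (m + k) = T k (m + (k-1)) + T k m := by
  unfold T
  rw [← Finset.sum_add_distrib]
  refine Finset.sum_congr rfl fun r hr => ?_
  have hroot : eval r (Q k) = 0 := by
    rw [Multiset.mem_toFinset, mem_roots (Q_monic k hk).ne_zero] at hr
    exact hr
  rw [Q_eval] at hroot
  have hsplit : r ^ (m + k) = r ^ (m + (k-1)) + r ^ m := by
    rw [pow_add, pow_add]
    have : r ^ k = r ^ (k-1) + 1 := by linear_combination hroot
    rw [this]; ring
  rw [hsplit]; ring

lemma T_eq_B (k : ℕ) (hk : 2 ≤ k) : ∀ j, T k j = B k j := by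
  intro j
  induction j using Nat.strong_induction_on with
  | _ j ih =>
    rcases lt_or_ge j k with hj | hj
    · exact T_base k hk j hj
    · obtain ⟨m, rfl⟩ : ∃ m, j = m + k := ⟨j - k, by omega⟩
      rw [T_rec k hk m, ih (m + (k-1)) (by omega), ih m (by omega), B_rec k hk m]

/-- For `k ≥ 2`, with `α_k` the root of `X^k + X - 1` in `(0,1)` :
`A_{k, n⊖1} - α_k·A_{k,n} = Σ_r c(r)·(r⁻¹ - α_k)·r^n` over the roots `r` of
`Q_k`, where `c(r) = r^k / (k·r - (k-1))`. -/
theorem A_diff_eq_sum_secondary (k : ℕ) (hk : 2 ≤ k) (α : ℝ)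
    (hα : α ∈ Set.Ioo (0 : ℝ) 1) (hαroot : α ^ k + α - 1 = 0) (n : ℕ) :
    ((A k (n - 1) : ℂ) - (α : ℂ) * (A k n : ℂ)) =
      ∑ r ∈ (Q k).roots.toFinset,
        r ^ k / ((k : ℂ) * r - ((k : ℂ) - 1)) * (r⁻¹ - (α : ℂ)) * r ^ n := by
  obtain ⟨a, rfl⟩ : ∃ a, k = a + 2 := ⟨k - 2, by omega⟩
  set k := a + 2 with hkdef
  have hrhs : ∑ r ∈ (Q k).roots.toFinset,
      r ^ k / ((k : ℂ) * r - ((k : ℂ) - 1)) * (r⁻¹ - (α : ℂ)) * r ^ n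
      = T k (n + (2*a+1)) - (α : ℂ) * T k (n + (2*a+2)) := by
    unfold T
    rw [Finset.mul_sum, ← Finset.sum_sub_distrib]
    refine Finset.sum_congr rfl fun r hr => ?_
    have hroot : eval r (Q k) = 0 := by
      rw [Multiset.mem_toFinset, mem_roots (Q_monic k hk).ne_zero] at hr
      exact hr
    have hr0 := Q_root_ne_zero k hk r hroot
    have hden := Q_root_den_ne_zero k hk r hroot
    have hk2 : k - 2 = a := by omega
    rw [hk2]
    have hpa : r ^ a ≠ 0 := pow_ne_zero _ hr0
    field_simp
    ring
  rw [hrhs, T_eq_B k hk, T_eq_B k hk]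
  have hB2 : B k (n + (2*a+2)) = (A k n : ℂ) := by
    unfold B
    rw [if_neg (by omega), if_neg (by omega),
      show n + (2*a+2) + 2 - 2*k = n from by omega]
  have hB1 : B k (n + (2*a+1)) = (A k (n-1) : ℂ) := by
    unfold B
    rcases Nat.eq_zero_or_pos n with hn | hn
    · subst hn
      rw [if_neg (by omega), if_pos (by omega)]
      simp [A_zero]
    · rw [if_neg (by omega), if_neg (by omega),
        show n + (2*a+1) + 2 - 2*k = n - 1 from by omega]
  rw [hB1, hB2]
end

section
/- Let θ, ρ ∈ ℝ with sin θ ≠ 0, and define a_n = cos(nθ + ρ) for n ∈ ℕ. Then there exists a strictly increasing sequence of natural numbers (n_j) with a_{n_j} ≥ 1/2 for all j, and likewise there exists a strictly increasing sequence of natural numbers (m_j) with a_{m_j} ≤ −1/2 for all j. -/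
set_option maxHeartbeats 1000000

open Finset

private lemma cos_cubic_identity (t : ℝ) :
    (1/2 - Real.cos t) * (1 + Real.cos t)^2
      = -(1/4) - 3/4 * Real.cos t - 3/4 * Real.cos (2*t) - 1/4 * Real.cos (3*t) := by
  rw [Real.cos_two_mul, Real.cos_three_mul]; ring

private lemma geom_cos_sum_bound (φ c : ℝ) (h : Complex.exp (φ * Complex.I) ≠ 1)
    {N M : ℕ} (hNM : N ≤ M) :
    |∑ n ∈ Finset.Ico N M, Real.cos (n * φ + c)|
      ≤ 2 / ‖Complex.exp (↑φ * Complex.I) - 1‖ := by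
  set w := Complex.exp (↑φ * Complex.I) with hw
  have hterm : ∀ n : ℕ, Real.cos (n * φ + c) = (Complex.exp (↑c * Complex.I) * w ^ n).re := by
    intro n
    have h1 : Complex.exp (↑c * Complex.I) * w ^ n = Complex.exp (↑(↑n * φ + c) * Complex.I) := by
      rw [hw, ← Complex.exp_nat_mul, ← Complex.exp_add]
      push_cast
      ring_nf
    rw [h1, Complex.exp_ofReal_mul_I_re]
  have hsum : ∑ n ∈ Finset.Ico N M, Real.cos (↑n * φ + c)
      = (Complex.exp (↑c * Complex.I) * ((w ^ M - w ^ N) / (w - 1))).re := by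
    rw [← geom_sum_Ico h hNM, Finset.mul_sum, Complex.re_sum]
    exact Finset.sum_congr rfl fun n _ => hterm n
  rw [hsum]
  calc |(Complex.exp (↑c * Complex.I) * ((w ^ M - w ^ N) / (w - 1))).re|
      ≤ ‖Complex.exp (↑c * Complex.I) * ((w ^ M - w ^ N) / (w - 1))‖ := by
        exact Complex.abs_re_le_norm _
    _ = ‖Complex.exp (↑c * Complex.I)‖ * (‖w ^ M - w ^ N‖ / ‖w - 1‖) := by
        rw [norm_mul, norm_div]
    _ ≤ 1 * (2 / ‖w - 1‖) := by
        have h2 : ‖Complex.exp (↑c * Complex.I)‖ = 1 := by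
          rw [Complex.norm_exp_ofReal_mul_I]
        rw [h2]
        have h3 : ‖w ^ M - w ^ N‖ ≤ 2 := by
          have hw1 : ‖w‖ = 1 := by
            rw [hw, Complex.norm_exp_ofReal_mul_I]
          have hwn : ∀ n : ℕ, ‖w ^ n‖ = 1 := fun n => by rw [norm_pow, hw1, one_pow]
          calc ‖w ^ M - w ^ N‖ ≤ ‖w ^ M‖ + ‖w ^ N‖ := norm_sub_le _ _
            _ = 2 := by rw [hwn, hwn]; norm_num
        gcongr
    _ = 2 / ‖w - 1‖ := one_mul _

private lemma key_half (θ ρ : ℝ) (hθ : Real.sin θ ≠ 0) (N : ℕ) :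
    ∃ n, N ≤ n ∧ 1/2 ≤ Real.cos (↑n * θ + ρ) := by
  by_contra hcon
  push_neg at hcon
  set z : ℂ := Complex.exp (↑θ * Complex.I) with hz
  have hz1 : z ≠ 1 := by
    intro h
    apply hθ
    have := congrArg Complex.im h
    rwa [hz, Complex.exp_ofReal_mul_I_im, Complex.one_im] at this
  have hz2e : Complex.exp (↑(2*θ) * Complex.I) = z^2 := by
    rw [hz, sq, ← Complex.exp_add]; congr 1; push_cast; ring
  have hz3e : Complex.exp (↑(3*θ) * Complex.I) = z^3 := by
    rw [hz, pow_succ, sq, ← Complex.exp_add, ← Complex.exp_add]; congr 1; push_cast; ring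
  have hz2 : z^2 ≠ 1 := by
    intro h
    have hre := congrArg Complex.re (hz2e.trans h)
    rw [Complex.exp_ofReal_mul_I_re, Complex.one_re] at hre
    have hsc := Real.sin_sq_add_cos_sq θ
    have h2m := Real.cos_two_mul θ
    have : Real.sin θ ^ 2 = 0 := by nlinarith
    exact hθ (by nlinarith [this])
  -- general re lemma
  have hre : ∀ (r s : ℝ) (j : ℕ), Real.cos (r + j * s)
      = (Complex.exp (↑r * Complex.I) * Complex.exp (↑s * Complex.I) ^ j).re := by
    intro r s j
    have h1 : Complex.exp (↑r * Complex.I) * Complex.exp (↑s * Complex.I) ^ j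
        = Complex.exp (↑(r + j * s) * Complex.I) := by
      rw [← Complex.exp_nat_mul, ← Complex.exp_add]; push_cast; ring_nf
    rw [h1, Complex.exp_ofReal_mul_I_re]
  by_cases h3 : z ^ 3 = 1
  · -- periodic case: three consecutive values
    have hsum0 : 1 + z + z^2 = 0 := by
      rcases mul_eq_zero.1 (show (z - 1) * (1 + z + z^2) = 0 by linear_combination h3) with h | h
      · exact absurd (sub_eq_zero.1 h) hz1
      · exact h
    have hsum4 : 1 + z^2 + (z^2)^2 = 0 := by linear_combination hsum0 + z * h3
    set β : ℝ := ↑N * θ + ρ with hβ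
    set a := Real.cos β with hA
    set b := Real.cos (β + θ) with hB
    set c := Real.cos (β + 2*θ) with hC
    have habc : a + b + c = 0 := by
      have h0 := congrArg Complex.re (mul_eq_zero_of_right (Complex.exp (↑β * Complex.I)) hsum0)
      rw [mul_add, mul_add, mul_one, Complex.add_re, Complex.add_re, Complex.zero_re] at h0
      have e1 : (Complex.exp (↑β * Complex.I)).re = a := Complex.exp_ofReal_mul_I_re β
      have e2 : (Complex.exp (↑β * Complex.I) * z).re = b := by
        rw [hz, ← pow_one (Complex.exp (↑θ * Complex.I)), ← hre β θ 1]
        norm_num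
        exact hB.symm
      have e3 : (Complex.exp (↑β * Complex.I) * z^2).re = c := by
        rw [hz, ← hre β θ 2]
        norm_num
        exact hC.symm
      linarith
    have hd : Real.cos (2*β) + Real.cos (2*β + 2*θ) + Real.cos (2*β + 4*θ) = 0 := by
      have h0 := congrArg Complex.re (mul_eq_zero_of_right (Complex.exp (↑(2*β) * Complex.I)) hsum4)
      rw [mul_add, mul_add, mul_one, Complex.add_re, Complex.add_re, Complex.zero_re] at h0
      have e1 : (Complex.exp (↑(2*β) * Complex.I)).re = Real.cos (2*β) :=
        Complex.exp_ofReal_mul_I_re (2*β)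
      have e2 : (Complex.exp (↑(2*β) * Complex.I) * z^2).re = Real.cos (2*β + 2*θ) := by
        rw [← hz2e, ← pow_one (Complex.exp (↑(2*θ) * Complex.I)), ← hre (2*β) (2*θ) 1]
        norm_num
      have e3 : (Complex.exp (↑(2*β) * Complex.I) * (z^2)^2).re = Real.cos (2*β + 4*θ) := by
        rw [← hz2e, ← hre (2*β) (2*θ) 2]
        norm_num
        ring_nf
      linarith
    have hsq : a^2 + b^2 + c^2 = 3/2 := by
      have q1 := Real.cos_sq β
      have q2 := Real.cos_sq (β + θ)
      have q3 := Real.cos_sq (β + 2*θ)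
      have r2 : (2:ℝ)*(β + θ) = 2*β + 2*θ := by ring
      have r3 : (2:ℝ)*(β + 2*θ) = 2*β + 4*θ := by ring
      rw [r2] at q2
      rw [r3] at q3
      rw [hA, hB, hC]
      nlinarith [hd]
    have ha' : a < 1/2 := by
      have := hcon N le_rfl
      rwa [← hβ] at this
    have hb' : b < 1/2 := by
      have := hcon (N+1) (by omega)
      have heq : ((N+1:ℕ):ℝ) * θ + ρ = β + θ := by rw [hβ]; push_cast; ring
      rwa [heq] at this
    have hc' : c < 1/2 := by
      have := hcon (N+2) (by omega)
      have heq : ((N+2:ℕ):ℝ) * θ + ρ = β + 2*θ := by rw [hβ]; push_cast; ring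
      rwa [heq] at this
    have ga : -1 ≤ a := Real.neg_one_le_cos β
    have gb : -1 ≤ b := Real.neg_one_le_cos _
    have gc : -1 ≤ c := Real.neg_one_le_cos _
    have p1 : 0 ≤ (1/2 - a) * (1 + a) := mul_nonneg (by linarith) (by linarith)
    have p2 : 0 ≤ (1/2 - b) * (1 + b) := mul_nonneg (by linarith) (by linarith)
    have p3 : 0 ≤ (1/2 - c) * (1 + c) := mul_nonneg (by linarith) (by linarith)
    have hs : (1/2 - a)*(1+a) + (1/2 - b)*(1+b) + (1/2 - c)*(1+c) = 0 := by
      linear_combination (-1/2) * habc - hsq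
    have ea : 1 + a = 0 := by
      rcases mul_eq_zero.1 (by linarith : (1/2 - a) * (1 + a) = 0) with h | h
      · linarith
      · exact h
    have eb : 1 + b = 0 := by
      rcases mul_eq_zero.1 (by linarith : (1/2 - b) * (1 + b) = 0) with h | h
      · linarith
      · exact h
    have ec : 1 + c = 0 := by
      rcases mul_eq_zero.1 (by linarith : (1/2 - c) * (1 + c) = 0) with h | h
      · linarith
      · exact h
    linarith
  · -- non-degenerate case: exponential sum bounds
    set b1 : ℝ := 2 / ‖z - 1‖ with hb1d
    set b2 : ℝ := 2 / ‖z^2 - 1‖ with hb2d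
    set b3 : ℝ := 2 / ‖z^3 - 1‖ with hb3d
    have hn1 : 0 ≤ b1 := by positivity
    have hn2 : 0 ≤ b2 := by positivity
    have hn3 : 0 ≤ b3 := by positivity
    set B : ℝ := b1 + b2 + b3 with hBd
    set M : ℕ := N + 4 * ⌈B⌉₊ + 4 with hM
    have hNM : N ≤ M := by omega
    have hMN : M - N = 4 * ⌈B⌉₊ + 4 := by omega
    have hcard : ((Finset.Ico N M).card : ℝ) = 4 * (⌈B⌉₊ : ℝ) + 4 := by
      rw [Nat.card_Ico, hMN]; push_cast [Nat.cast_add]; ring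
    have hCge : 4 * B + 4 ≤ ((Finset.Ico N M).card : ℝ) := by
      rw [hcard]
      have h := Nat.le_ceil B
      gcongr
    have hS1 : |∑ n ∈ Finset.Ico N M, Real.cos (↑n * θ + ρ)| ≤ b1 := by
      have h := geom_cos_sum_bound θ ρ (by rw [← hz]; exact hz1) hNM
      rwa [← hz] at h
    have hS2 : |∑ n ∈ Finset.Ico N M, Real.cos (↑n * (2*θ) + 2*ρ)| ≤ b2 := by
      have h := geom_cos_sum_bound (2*θ) (2*ρ) (by rw [hz2e]; exact hz2) hNM
      rwa [hz2e] at h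
    have hS3 : |∑ n ∈ Finset.Ico N M, Real.cos (↑n * (3*θ) + 3*ρ)| ≤ b3 := by
      have h := geom_cos_sum_bound (3*θ) (3*ρ) (by rw [hz3e]; exact h3) hNM
      rwa [hz3e] at h
    have hpos : 0 ≤ ∑ n ∈ Finset.Ico N M,
        (1/2 - Real.cos (↑n * θ + ρ)) * (1 + Real.cos (↑n * θ + ρ))^2 := by
      refine Finset.sum_nonneg fun n hn => mul_nonneg ?_ (sq_nonneg _)
      have := hcon n (Finset.mem_Ico.1 hn).1
      linarith
    have hid : ∑ n ∈ Finset.Ico N M,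
        (1/2 - Real.cos (↑n * θ + ρ)) * (1 + Real.cos (↑n * θ + ρ))^2
        = -(((Finset.Ico N M).card : ℝ)/4)
          - 3/4 * ∑ n ∈ Finset.Ico N M, Real.cos (↑n * θ + ρ)
          - 3/4 * ∑ n ∈ Finset.Ico N M, Real.cos (↑n * (2*θ) + 2*ρ)
          - 1/4 * ∑ n ∈ Finset.Ico N M, Real.cos (↑n * (3*θ) + 3*ρ) := by
      have hterm : ∀ n : ℕ, (1/2 - Real.cos (↑n * θ + ρ)) * (1 + Real.cos (↑n * θ + ρ))^2
          = -(1/4) - 3/4 * Real.cos (↑n * θ + ρ) - 3/4 * Real.cos (↑n * (2*θ) + 2*ρ)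
            - 1/4 * Real.cos (↑n * (3*θ) + 3*ρ) := by
        intro n
        have r2 : (↑n : ℝ) * (2*θ) + 2*ρ = 2 * (↑n * θ + ρ) := by ring
        have r3 : (↑n : ℝ) * (3*θ) + 3*ρ = 3 * (↑n * θ + ρ) := by ring
        rw [r2, r3, cos_cubic_identity]
      rw [Finset.sum_congr rfl fun n _ => hterm n]
      rw [Finset.sum_sub_distrib, Finset.sum_sub_distrib, Finset.sum_sub_distrib,
        ← Finset.mul_sum, ← Finset.mul_sum, ← Finset.mul_sum, Finset.sum_const]
      simp only [nsmul_eq_mul]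
      ring
    obtain ⟨l1, u1⟩ := abs_le.1 hS1
    obtain ⟨l2, u2⟩ := abs_le.1 hS2
    obtain ⟨l3, u3⟩ := abs_le.1 hS3
    rw [hid] at hpos
    linarith

/-- If `sin θ ≠ 0`, the sequence `cos (nθ + ρ)` is `≥ 1/2` along some strictly
increasing sequence of indices, and `≤ -1/2` along another one. -/
theorem cos_seq_half_subsequences (θ ρ : ℝ) (hθ : Real.sin θ ≠ 0) :
    (∃ f : ℕ → ℕ, StrictMono f ∧ ∀ j : ℕ, 1 / 2 ≤ Real.cos (f j * θ + ρ)) ∧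
    (∃ g : ℕ → ℕ, StrictMono g ∧ ∀ j : ℕ, Real.cos (g j * θ + ρ) ≤ -(1 / 2)) := by
  constructor
  · apply Filter.extraction_of_frequently_atTop
       (P := fun n : ℕ => 1 / 2 ≤ Real.cos (↑n * θ + ρ))
    rw [Filter.frequently_atTop]
    intro N
    obtain ⟨n, hn, hcos⟩ := key_half θ ρ hθ N
    exact ⟨n, hn, hcos⟩
  · apply Filter.extraction_of_frequently_atTop
       (P := fun n : ℕ => Real.cos (↑n * θ + ρ) ≤ -(1 / 2))
    rw [Filter.frequently_atTop]
    intro N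
    obtain ⟨n, hn, hcos⟩ := key_half θ (ρ + Real.pi) hθ N
    refine ⟨n, hn, ?_⟩
    have : (↑n : ℝ) * θ + (ρ + Real.pi) = (↑n * θ + ρ) + Real.pi := by ring
    rw [this, Real.cos_add_pi] at hcos
    linarith
end

section
/- Let δ_3(n) = F_3(n) − α_3·n, and set d₃⁺ = 0.854187179928304211983581540152668 and d₃⁻ = −0.708415898743967960305146324178773. Then d₃⁺ − 3·10⁻³³ ≤ sup_n δ_3(n) ≤ d₃⁺ and d₃⁻ ≤ inf_n δ_3(n) ≤ d₃⁻ + 3·10⁻³³. In particular |F_3(n) − α_3·n| < 1 for all n ≥ 0, so the discrepancy Δ_3 = sup_n |δ_3(n)| is finite and equals sup_n δ_3(n). -/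
/-- Fuel-limited version of Hofstadter's recursion:
`Fa k fuel n` equals `F_k n` whenever `fuel ≥ n`. -/
def Fa (k : ℕ) : ℕ → ℕ → ℕ
  | 0, _ => 0
  | _ + 1, 0 => 0
  | fuel + 1, n + 1 => (n + 1) - (Fa k fuel)^[k] n

/-- Hofstadter's function `F_k` : `F k 0 = 0` and `F k n = n - (F k)^[k] (n-1)`
for `n ≥ 1` (since `F_k m ≤ m`, the fuel `n` is always sufficient). -/
def F (k : ℕ) (n : ℕ) : ℕ := Fa k n n

/-- The function `L_k n = n + (F k)^[k-1] n`. -/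
def L (k : ℕ) (n : ℕ) : ℕ := n + (F k)^[k - 1] n

namespace Hof

theorem Fa_le (k f n : ℕ) : Fa k f n ≤ n := by
  match f, n with
  | 0, n => simp [Fa]
  | f+1, 0 => simp [Fa]
  | f+1, n+1 => rw [Fa]; omega

theorem iter_le {g : ℕ → ℕ} (hg : ∀ m, g m ≤ m) (j n : ℕ) : g^[j] n ≤ n := by
  induction j generalizing n with
  | zero => simp
  | succ j ih =>
    rw [Function.iterate_succ_apply]
    exact (ih (g n)).trans (hg n)

theorem Fa_stable (k : ℕ) : ∀ f m, m ≤ f → Fa k (f + 1) m = Fa k f m := by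
  intro f
  induction f with
  | zero => intro m hm; interval_cases m <;> simp [Fa]
  | succ f ih =>
    intro m hm
    match m with
    | 0 => simp [Fa]
    | n+1 =>
      rw [Fa, Fa]
      congr 1
      have hiter : ∀ j, (Fa k (f+1))^[j] n = (Fa k f)^[j] n := by
        intro j
        induction j with
        | zero => rfl
        | succ j ihj =>
          rw [Function.iterate_succ_apply', Function.iterate_succ_apply', ihj]
          exact ih _ ((iter_le (Fa_le k f) j n).trans (by omega))
      exact hiter k

theorem Fa_eq_F (k : ℕ) : ∀ f m, m ≤ f → Fa k f m = F k m := by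
  have key : ∀ d f m, m ≤ f → Fa k (f + d) m = Fa k f m := by
    intro d
    induction d with
    | zero => intro f m _; rfl
    | succ d ih =>
      intro f m hm
      have : f + (d+1) = (f+d) + 1 := by omega
      rw [this, Fa_stable k (f+d) m (by omega), ih f m hm]
  intro f m hm
  have : f = m + (f - m) := by omega
  rw [this, key (f-m) m m le_rfl]; rfl

theorem F_le (k n : ℕ) : F k n ≤ n := Fa_le k n n

theorem F_iter_le (k j n : ℕ) : (F k)^[j] n ≤ n := iter_le (F_le k) j n

theorem F_rec (k n : ℕ) : F k (n + 1) = (n + 1) - (F k)^[k] n := by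
  show Fa k (n+1) (n+1) = _
  rw [Fa]
  congr 1
  have : ∀ j, (Fa k n)^[j] n = (F k)^[j] n := by
    intro j
    induction j with
    | zero => rfl
    | succ j ihj =>
      rw [Function.iterate_succ_apply', Function.iterate_succ_apply', ihj]
      exact Fa_eq_F k n _ (F_iter_le k j n)
  exact this k

/-- the k=3 recursion in additive form -/
theorem H_rec (n : ℕ) : F 3 (n + 1) + F 3 (F 3 (F 3 n)) = n + 1 := by
  have h := F_rec 3 n
  have h2 : (F 3)^[3] n = F 3 (F 3 (F 3 n)) := by
    show (F 3)^[3] n = _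
    simp [Function.iterate_succ_apply, Function.iterate_one]
  rw [h2] at h
  have hle : F 3 (F 3 (F 3 n)) ≤ n := (F_le 3 _).trans ((F_le 3 _).trans (F_le 3 n))
  omega

theorem H_step : ∀ n, F 3 (n + 1) = F 3 n ∨ F 3 (n + 1) = F 3 n + 1 := by
  intro n
  induction n using Nat.strong_induction_on with
  | _ n ih =>
    match n with
    | 0 => right; decide
    | n+1 =>
      have h1 := H_rec (n+1)
      have h2 := H_rec n
      -- need : F 3 (F 3 (F 3 (n+1))) - F 3 (F 3 (F 3 n)) ∈ {0,1}
      have s1 : F 3 (n+1) = F 3 n ∨ F 3 (n+1) = F 3 n + 1 := ih n (by omega)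
      have hle : F 3 n ≤ n := F_le 3 n
      rcases s1 with h | h
      · rw [h] at h1; omega
      · have s2 : F 3 (F 3 n + 1) = F 3 (F 3 n) ∨ F 3 (F 3 n + 1) = F 3 (F 3 n) + 1 :=
          ih (F 3 n) (by omega)
        rw [h] at h1
        rcases s2 with h' | h'
        · rw [h'] at h1; omega
        · have hle2 : F 3 (F 3 n) ≤ n := (F_le 3 _).trans hle
          have s3 : F 3 (F 3 (F 3 n) + 1) = F 3 (F 3 (F 3 n)) ∨
              F 3 (F 3 (F 3 n) + 1) = F 3 (F 3 (F 3 n)) + 1 := ih (F 3 (F 3 n)) (by omega)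
          rw [h'] at h1
          rcases s3 with h'' | h'' <;> rw [h''] at h1 <;> omega

theorem H_mono : Monotone (F 3) := by
  apply monotone_nat_of_le_succ
  intro n
  rcases H_step n with h | h <;> omega

end Hof

namespace Hof

def A : ℕ → ℕ
  | 0 => 1 | 1 => 2 | 2 => 3
  | n+3 => A (n+2) + A n

def B : ℕ → ℕ
  | 0 => 1
  | n+1 => A n

theorem A_rec (t : ℕ) : A (t + 3) = A (t + 2) + A t := by rw [A]

theorem A_pos (n : ℕ) : 1 ≤ A n := by
  induction n using Nat.strong_induction_on with
  | _ n ih =>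
    match n with
    | 0 => decide
    | 1 => decide
    | 2 => decide
    | t+3 => rw [A_rec]; have := ih t (by omega); omega

theorem A_succ_gt (n : ℕ) : A n < A (n + 1) := by
  match n with
  | 0 => decide
  | 1 => decide
  | t+2 => rw [A_rec]; have := A_pos t; omega

theorem A_mono : StrictMono A := strictMono_nat_of_lt_succ A_succ_gt

theorem A_gt (n : ℕ) : n + 1 ≤ A n := by
  induction n with
  | zero => decide
  | succ n ih => have := A_succ_gt n; omega

theorem B_eq (n : ℕ) : B (n + 1) = A n := rfl

theorem B_rec (n : ℕ) : B (n + 3) = B (n + 2) + B n := by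
  match n with
  | 0 => decide
  | t+1 => show A (t+3) = A (t+2) + B (t+1); rw [A_rec]; rfl

/-- The central splitting lemma: `H (A m + r) = A (m-1) + H r` for `3 ≤ m`, `r ≤ A (m-2)`. -/
theorem H_split : ∀ n m r, 3 ≤ m → r ≤ A (m - 2) → n = A m + r → F 3 n = A (m - 1) + F 3 r := by
  intro n
  induction n using Nat.strong_induction_on with
  | _ n ih =>
    -- the core case: r ≥ 1
    have core : ∀ m r, 3 ≤ m → 1 ≤ r → r ≤ A (m - 2) → n = A m + r →
        F 3 n = A (m - 1) + F 3 r := by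
      intro m r hm hr1 hr2 hn
      match m, hm with
      | 3, _ =>
        have hb : r ≤ 2 := by have : A (3-2) = 2 := by decide
                              omega
        interval_cases r <;> (subst hn; decide)
      | 4, _ =>
        have hb : r ≤ 3 := by have : A (4-2) = 3 := by decide
                              omega
        interval_cases r <;> (subst hn; decide)
      | (m'+5), _ =>
        show F 3 n = A (m'+4) + F 3 r
        have hr2' : r ≤ A (m'+3) := hr2
        have hA3 : A (m'+5) = A (m'+4) + A (m'+2) := A_rec (m'+2)
        have hA4 : A (m'+4) = A (m'+3) + A (m'+1) := A_rec (m'+1)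
        have hApos2 := A_pos (m'+2)
        have hApos5 := A_pos (m'+5)
        have hn1 : n - 1 = A (m'+5) + (r - 1) := by omega
        have hH1 : F 3 (n-1) = A (m'+4) + F 3 (r-1) :=
          ih (n-1) (by omega) (m'+5) (r-1) (by omega) (by show r-1 ≤ A (m'+3); omega) hn1
        have hHA2 : F 3 (A (m'+3)) = A (m'+2) := by
          have h0 := ih (A (m'+3)) (by have := A_mono (show m'+3 < m'+5 by omega); omega)
            (m'+3) 0 (by omega) (Nat.zero_le _) (by omega)
          show _ = A (m'+3-1)
          rw [h0]; rfl
        have hr1le : F 3 (r-1) ≤ A (m'+2) := by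
          calc F 3 (r-1) ≤ F 3 (A (m'+3)) := H_mono (by omega)
          _ = A (m'+2) := hHA2
        have hHA3 : F 3 (A (m'+2)) = A (m'+1) := by
          match m' with
          | 0 => decide
          | (k+1) =>
            have hn6 : n = A (k+6) + (r - 1 + 1) := by rw [hn]; congr 1; omega
            have h0 := ih (A (k+3)) (by have := A_mono (show k+3 < k+6 by omega); omega)
              (k+3) 0 (by omega) (Nat.zero_le _) (by omega)
            show _ = A (k+3-1)
            rw [h0]; rfl
        have hv1 : A (m'+4) + F 3 (r-1) < n := by omega
        have hH2 : F 3 (A (m'+4) + F 3 (r-1)) = A (m'+3) + F 3 (F 3 (r-1)) :=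
          ih (A (m'+4) + F 3 (r-1)) hv1 (m'+4) (F 3 (r-1)) (by omega)
            (by show F 3 (r-1) ≤ A (m'+2); exact hr1le) rfl
        have hr2le : F 3 (F 3 (r-1)) ≤ A (m'+1) := by
          calc F 3 (F 3 (r-1)) ≤ F 3 (A (m'+2)) := H_mono hr1le
          _ = A (m'+1) := hHA3
        have hv2 : A (m'+3) + F 3 (F 3 (r-1)) < n := by omega
        have hH3 : F 3 (A (m'+3) + F 3 (F 3 (r-1))) = A (m'+2) + F 3 (F 3 (F 3 (r-1))) :=
          ih (A (m'+3) + F 3 (F 3 (r-1))) hv2 (m'+3) (F 3 (F 3 (r-1))) (by omega)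
            (by show F 3 (F 3 (r-1)) ≤ A (m'+1); exact hr2le) rfl
        have hrecn : F 3 n + F 3 (F 3 (F 3 (n-1))) = n := by
          have h0 := H_rec (n-1)
          have hn' : n - 1 + 1 = n := by omega
          rw [hn'] at h0; exact h0
        have hrecr : F 3 r + F 3 (F 3 (F 3 (r-1))) = r := by
          have h0 := H_rec (r-1)
          have hr' : r - 1 + 1 = r := by omega
          rw [hr'] at h0; exact h0
        have hchain : F 3 (F 3 (F 3 (n-1))) = A (m'+2) + F 3 (F 3 (F 3 (r-1))) := by
          rw [hH1, hH2, hH3]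
        have hfle : F 3 (F 3 (F 3 (r-1))) ≤ r - 1 :=
          (F_le 3 _).trans ((F_le 3 _).trans (F_le 3 (r-1)))
        omega
    intro m r hm hr2 hn
    rcases Nat.eq_zero_or_pos r with hr0 | hr1
    · subst hr0
      match m, hm with
      | 3, _ => subst hn; decide
      | 4, _ => subst hn; decide
      | (m'+5), _ =>
        show F 3 n = A (m'+4) + F 3 0
        have hA3 : A (m'+5) = A (m'+4) + A (m'+2) := A_rec (m'+2)
        have hA4 : A (m'+4) = A (m'+3) + A (m'+1) := A_rec (m'+1)
        have h1 : F 3 n = A (m'+3) + F 3 (A (m'+2)) := by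
          have h0 := core (m'+4) (A (m'+2)) (by omega) (A_pos _)
            (by show A (m'+2) ≤ A (m'+2); exact le_rfl) (by omega)
          show F 3 n = A (m'+4-1) + _
          rw [h0]
        have hHA3 : F 3 (A (m'+2)) = A (m'+1) := by
          match m' with
          | 0 => decide
          | (k+1) =>
            have hn6 : n = A (k+6) + 0 := hn
            have := A_pos (k+6)
            have h0 := ih (A (k+3)) (by have := A_mono (show k+3 < k+6 by omega); omega)
              (k+3) 0 (by omega) (Nat.zero_le _) (by omega)
            show _ = A (k+3-1)
            rw [h0]; rfl
        have hF0 : F 3 0 = 0 := rfl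
        omega
    · exact core m r hm hr1 hr2 hn


def sumA : List ℕ → ℕ
  | [] => 0
  | i :: l => A i + sumA l

def sumB : List ℕ → ℕ
  | [] => 0
  | i :: l => B i + sumB l

/-- canonical decomposition: strictly decreasing indices with gaps ≥ 3 -/
def canonb : List ℕ → Bool
  | [] => true
  | [_] => true
  | i :: j :: l => decide (j + 3 ≤ i) && canonb (j :: l)

theorem canonb_cons {i : ℕ} {l : List ℕ} (h : canonb (i :: l) = true) : canonb l = true := by
  match l with
  | [] => rfl
  | j :: l' => simp [canonb] at h ⊢; exact h.2

theorem sumA_lt : ∀ (l : List ℕ) (i : ℕ), canonb (i :: l) = true → sumA (i :: l) < A (i + 1) := by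
  intro l
  induction l with
  | nil => intro i _; show A i + 0 < A (i+1); have := A_succ_gt i; omega
  | cons j l' ih =>
    intro i hc
    have hc' : canonb (j :: l') = true := canonb_cons hc
    have hij : j + 3 ≤ i := by simp [canonb] at hc; exact hc.1
    have h1 : sumA (j :: l') < A (j + 1) := ih j hc'
    have h2 : A (j + 1) ≤ A (i - 2) := A_mono.le_iff_le.mpr (by omega)
    have h3 : A (i + 1) = A i + A (i - 2) := by
      have : i - 2 + 3 = i + 1 := by omega
      have h4 := A_rec (i - 2)
      rw [this] at h4
      have : i - 2 + 2 = i := by omega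
      rw [this] at h4
      exact h4
    show A i + sumA (j :: l') < A (i + 1)
    omega

theorem H_sumA : ∀ (l : List ℕ), canonb l = true → F 3 (sumA l) = sumB l := by
  intro l
  induction l with
  | nil => intro _; rfl
  | cons i l' ih =>
    intro hc
    have hc' : canonb l' = true := canonb_cons hc
    match l', hc, ih with
    | [], _, _ =>
      show F 3 (A i + 0) = B i + 0
      rw [Nat.add_zero, Nat.add_zero]
      match i with
      | 0 => decide
      | 1 => decide
      | 2 => decide
      | (t+3) =>
        have h0 := H_split (A (t+3)) (t+3) 0 (by omega) (Nat.zero_le _) (by omega)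
        rw [h0]; rfl
    | j :: l'', hc, ih =>
      have hij : j + 3 ≤ i := by simp [canonb] at hc; exact hc.1
      have hlt : sumA (j :: l'') < A (j + 1) := sumA_lt l'' j (canonb_cons hc)
      have hle : sumA (j :: l'') ≤ A (i - 2) := by
        have := A_mono.le_iff_le.mpr (show j + 1 ≤ i - 2 by omega)
        omega
      have h0 := H_split (A i + sumA (j :: l'')) i (sumA (j :: l'')) (by omega) hle rfl
      show F 3 (A i + sumA (j :: l'')) = B i + sumB (j :: l'')
      rw [h0, ih (canonb_cons hc)]
      congr 1
      match i, hij with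
      | (t+3), _ => rfl

theorem exists_decomp : ∀ n : ℕ, ∃ l : List ℕ, canonb l = true ∧ sumA l = n := by
  intro n
  induction n using Nat.strong_induction_on with
  | _ n ih =>
    rcases Nat.eq_zero_or_pos n with h0 | hpos
    · exact ⟨[], rfl, h0.symm⟩
    · set m := Nat.findGreatest (fun t => A t ≤ n) n with hm
      have hAm : A m ≤ n :=
        Nat.findGreatest_spec (P := fun t => A t ≤ n) (Nat.zero_le n)
          (show A 0 ≤ n by show 1 ≤ n; omega)
      have hAm1 : n < A (m + 1) := by
        by_contra hcon
        push_neg at hcon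
        have hmn : m + 1 ≤ n := by have := A_gt (m+1); omega
        have := Nat.findGreatest_is_greatest (P := fun t => A t ≤ n)
          (show Nat.findGreatest (fun t => A t ≤ n) n < m+1 by omega) hmn
        simp at this
        omega
      rcases Nat.lt_or_ge m 3 with hm3 | hm3
      · -- m ≤ 2 : then r = 0 since A(m+1) - A m = 1
        have hr0 : n = A m := by interval_cases m <;> simp_all [A] <;> omega
        exact ⟨[m], by match m with | 0 => rfl | 1 => rfl | 2 => rfl | _+3 => rfl, by
          show A m + 0 = n; omega⟩
      · have hrec : A (m + 1) = A m + A (m - 2) := by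
          have h4 := A_rec (m - 2)
          have e1 : m - 2 + 3 = m + 1 := by omega
          have e2 : m - 2 + 2 = m := by omega
          rw [e1, e2] at h4
          exact h4
        have hrlt : n - A m < A (m - 2) := by omega
        obtain ⟨l', hcl', hsl'⟩ := ih (n - A m) (by have := A_pos m; omega)
        refine ⟨m :: l', ?_, ?_⟩
        · match l', hcl', hsl' with
          | [], _, _ => match m with | 0 => rfl | 1 => rfl | 2 => rfl | _+3 => rfl
          | j :: l'', hcl', hsl' =>
            have hAj : A j ≤ n - A m := by
              have : A j ≤ sumA (j :: l'') := by show A j ≤ A j + _; omega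
              omega
            have : j < m - 2 := by
              by_contra hcon
              push_neg at hcon
              have := A_mono.le_iff_le.mpr hcon
              omega
            show (decide (j + 3 ≤ m) && canonb (j :: l'')) = true
            simp [hcl']
            omega
        · show A m + sumA l' = n
          omega


section Real
variable (α : ℝ)

/-- e i = B i - α A i -/
noncomputable def eR (i : ℕ) : ℝ := (B i : ℝ) - α * (A i : ℝ)

theorem sum_eR : ∀ l : List ℕ, (sumB l : ℝ) - α * (sumA l : ℝ) = (l.map (eR α)).sum := by
  intro l
  induction l with
  | nil => simp [sumA, sumB]
  | cons i l' ih =>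
    show ((B i + sumB l' : ℕ) : ℝ) - α * ((A i + sumA l' : ℕ) : ℝ) = eR α i + (l'.map (eR α)).sum
    push_cast
    rw [← ih, eR]
    ring

theorem erec3 (n : ℕ) : eR α (n + 3) = eR α (n + 2) + eR α n := by
  unfold eR
  rw [A_rec, B_rec]
  push_cast
  ring

variable (hα : α ∈ Set.Ioo (0 : ℝ) 1) (hαroot : α ^ 3 + α - 1 = 0)
include hα hαroot

theorem alpha_gt {q : ℝ} (hq0 : 0 ≤ q) (h : q ^ 3 + q - 1 < 0) : q < α := by
  nlinarith [hα.1, sq_nonneg (α + q), sq_nonneg (α - q), sq_nonneg α, sq_nonneg q,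
    mul_nonneg hq0 hα.1.le]

theorem alpha_lt {q : ℝ} (hq0 : 0 ≤ q) (h : 0 < q ^ 3 + q - 1) : α < q := by
  nlinarith [hα.1, sq_nonneg (α + q), sq_nonneg (α - q), sq_nonneg α, sq_nonneg q,
    mul_nonneg hq0 hα.1.le]

theorem a68 : (0.68 : ℝ) < α := by
  have := alpha_gt α hα hαroot (q := 0.68) (by norm_num) (by norm_num)
  linarith

theorem a69 : α < (0.69 : ℝ) := by
  have := alpha_lt α hα hαroot (q := 0.69) (by norm_num) (by norm_num)
  linarith

theorem sLemma : ∀ n : ℕ, eR α (n + 2) + α ^ 2 * eR α (n + 1) + α * eR α n = 0 := by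
  intro n
  induction n with
  | zero =>
    show ((B 2 : ℝ) - α * (A 2 : ℝ)) + α ^ 2 * ((B 1 : ℝ) - α * (A 1 : ℝ))
        + α * ((B 0 : ℝ) - α * (A 0 : ℝ)) = 0
    norm_num [A, B]
    linear_combination (-2 : ℝ) * hαroot
  | succ n ih =>
    have h3 := erec3 α n
    rw [show n + 1 + 2 = n + 3 by ring, h3, show n + 1 + 1 = n + 2 by ring]
    linear_combination (1 + α ^ 2) * ih - (α * eR α (n + 1) + eR α n) * hαroot

theorem Qval : ∀ n : ℕ,
    eR α (n+1) ^ 2 + α ^ 2 * eR α (n+1) * eR α n + α * eR α n ^ 2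
      = α ^ n * (eR α 1 ^ 2 + α ^ 2 * eR α 1 * eR α 0 + α * eR α 0 ^ 2) := by
  intro n
  induction n with
  | zero => ring
  | succ n ih =>
    have hS := sLemma α hα hαroot n
    have he2 : eR α (n + 2) = -(α ^ 2) * eR α (n + 1) - α * eR α n := by linarith
    calc eR α (n+2) ^ 2 + α ^ 2 * eR α (n+2) * eR α (n+1) + α * eR α (n+1) ^ 2
        = α * (eR α (n+1) ^ 2 + α ^ 2 * eR α (n+1) * eR α n + α * eR α n ^ 2) := by
          rw [he2]; ring
      _ = α ^ (n+1) * (eR α 1 ^ 2 + α ^ 2 * eR α 1 * eR α 0 + α * eR α 0 ^ 2) := by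
          rw [ih]; ring

theorem eR0 : eR α 0 = 1 - α := by norm_num [eR, A, B]

theorem eR1 : eR α 1 = 1 - 2 * α := by
  show (B 1 : ℝ) - α * (A 1 : ℝ) = 1 - 2*α
  norm_num [A, B]
  ring

theorem Q0_le : eR α 1 ^ 2 + α ^ 2 * eR α 1 * eR α 0 + α * eR α 0 ^ 2
    ≤ (1 - α ^ 3 / 4) / 4 := by
  rw [eR0 α hα hαroot, eR1 α hα hαroot]
  have h1 := a68 α hα hαroot
  have h2 := a69 α hα hαroot
  nlinarith [sq_nonneg (α - 0.6823), hα.1]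

theorem e_sq (n : ℕ) : eR α (n + 1) ^ 2 ≤ α ^ n / 4 := by
  have hQ := Qval α hα hαroot n
  have hid : eR α (n+1) ^ 2 * (1 - α ^ 3 / 4)
      = (eR α (n+1) ^ 2 + α ^ 2 * eR α (n+1) * eR α n + α * eR α n ^ 2)
        - α * (eR α n + (α / 2) * eR α (n+1)) ^ 2 := by ring
  have hpos : (0:ℝ) < 1 - α ^ 3 / 4 := by nlinarith [hα.1, hα.2]
  have hQ0 := Q0_le α hα hαroot
  have hpow : (0:ℝ) ≤ α ^ n := pow_nonneg hα.1.le n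
  have hsq : (0:ℝ) ≤ α * (eR α n + (α / 2) * eR α (n+1)) ^ 2 :=
    mul_nonneg hα.1.le (sq_nonneg _)
  have h2 : eR α (n+1) ^ 2 * (1 - α ^ 3 / 4) ≤ α ^ n * ((1 - α ^ 3 / 4) / 4) := by
    rw [hid, hQ]
    have := mul_le_mul_of_nonneg_left hQ0 hpow
    linarith
  have h3 : α ^ n * ((1 - α ^ 3 / 4) / 4) = (α ^ n / 4) * (1 - α ^ 3 / 4) := by ring
  rw [h3] at h2
  exact le_of_mul_le_mul_right h2 hpos

theorem eabs (j : ℕ) (hj : 1 ≤ j) : |eR α j| ≤ (1/2) * α ^ ((j - 1) / 2) := by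
  obtain ⟨t, rfl⟩ : ∃ t, j = t + 1 := ⟨j - 1, by omega⟩
  have h1 : eR α (t+1) ^ 2 ≤ α ^ t / 4 := e_sq α hα hαroot t
  have h2 : α ^ t ≤ α ^ (2 * ((t + 1 - 1) / 2)) :=
    pow_le_pow_of_le_one hα.1.le hα.2.le (by omega)
  have h3 : eR α (t+1) ^ 2 ≤ ((1/2) * α ^ ((t + 1 - 1) / 2)) ^ 2 := by
    have : ((1/2) * α ^ ((t + 1 - 1) / 2)) ^ 2 = α ^ (2 * ((t + 1 - 1) / 2)) / 4 := by
      rw [mul_pow, ← pow_mul]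
      ring_nf
    rw [this]
    linarith
  have hb : (0:ℝ) ≤ (1/2) * α ^ ((t + 1 - 1) / 2) :=
    mul_nonneg (by norm_num) (pow_nonneg hα.1.le _)
  calc |eR α (t+1)| = Real.sqrt (eR α (t+1) ^ 2) := (Real.sqrt_sq_eq_abs _).symm
    _ ≤ Real.sqrt (((1/2) * α ^ ((t + 1 - 1) / 2)) ^ 2) := Real.sqrt_le_sqrt h3
    _ = (1/2) * α ^ ((t + 1 - 1) / 2) := Real.sqrt_sq hb

end Real


section Tail
variable (α : ℝ)

/-- geometric tail majorant: `Gr j ≥ Σ_{i ≥ j} |e i|` -/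
noncomputable def Gr (j : ℕ) : ℝ :=
  if j % 2 = 1 then α ^ ((j - 1) / 2) / (1 - α)
  else (1/2) * α ^ ((j - 2) / 2) + α ^ (j / 2) / (1 - α)

variable (hα : α ∈ Set.Ioo (0 : ℝ) 1) (hαroot : α ^ 3 + α - 1 = 0)
include hα hαroot

theorem grec (j : ℕ) (hj : 1 ≤ j) : Gr α j = (1/2) * α ^ ((j - 1) / 2) + Gr α (j + 1) := by
  have h1 : (0:ℝ) < 1 - α := by linarith [hα.2]
  rcases Nat.even_or_odd j with he | ho
  · obtain ⟨m, rfl⟩ : ∃ m, j = 2 * m + 2 := by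
      obtain ⟨c, hc⟩ := he; exact ⟨c - 1, by omega⟩
    have e1 : (2*m+2) % 2 = 0 := by omega
    have e2 : (2*m+3) % 2 = 1 := by omega
    have e3 : (2*m+2-2)/2 = m := by omega
    have e4 : (2*m+2)/2 = m+1 := by omega
    have e5 : (2*m+2-1)/2 = m := by omega
    have e6 : (2*m+3-1)/2 = m+1 := by omega
    rw [Gr, Gr, show 2*m+2+1 = 2*m+3 from rfl, if_neg (by omega), if_pos e2, e3, e4, e5, e6]
  · obtain ⟨m, rfl⟩ : ∃ m, j = 2 * m + 1 := by
      obtain ⟨c, hc⟩ := ho; exact ⟨c, by omega⟩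
    have e2 : (2*m+2) % 2 = 0 := by omega
    have e3 : (2*m+1-1)/2 = m := by omega
    have e4 : (2*m+2-2)/2 = m := by omega
    have e5 : (2*m+2)/2 = m+1 := by omega
    rw [Gr, Gr, show 2*m+1+1 = 2*m+2 from rfl, if_pos (by omega), if_neg (by omega),
      e3, e4, e5]
    field_simp
    ring

theorem gr_nonneg (j : ℕ) : 0 ≤ Gr α j := by
  have h1 : (0:ℝ) < 1 - α := by linarith [hα.2]
  have h2 : (0:ℝ) < α := hα.1
  rw [Gr]
  split <;> positivity

theorem gr_step (j : ℕ) (hj : 1 ≤ j) : Gr α (j + 1) ≤ Gr α j := by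
  rw [grec α hα hαroot j hj]
  have : (0:ℝ) ≤ (1/2) * α ^ ((j - 1) / 2) :=
    mul_nonneg (by norm_num) (pow_nonneg hα.1.le _)
  linarith

theorem gr_mono {i j : ℕ} (hi : 1 ≤ i) (hij : i ≤ j) : Gr α j ≤ Gr α i := by
  induction j with
  | zero => omega
  | succ j ih =>
    rcases Nat.lt_or_ge i (j+1) with h | h
    · exact (gr_step α hα hαroot j (by omega)).trans (ih (by omega))
    · have : i = j + 1 := by omega
      rw [this]

theorem gr3 (j : ℕ) (hj : 1 ≤ j) : eR α j + Gr α (j + 3) ≤ Gr α j := by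
  have h1 := eabs α hα hαroot j hj
  have h2 : Gr α (j+3) ≤ Gr α (j+1) := gr_mono α hα hαroot (by omega) (by omega)
  have h3 := grec α hα hαroot j hj
  have h4 : eR α j ≤ |eR α j| := le_abs_self _
  linarith

theorem gr3' (j : ℕ) (hj : 1 ≤ j) : -eR α j + Gr α (j + 3) ≤ Gr α j := by
  have h1 := eabs α hα hαroot j hj
  have h2 : Gr α (j+3) ≤ Gr α (j+1) := gr_mono α hα hαroot (by omega) (by omega)
  have h3 := grec α hα hαroot j hj
  have h4 : -eR α j ≤ |eR α j| := neg_le_abs _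
  linarith

theorem gr_bound : Gr α 450 ≤ 1 / 10 ^ 36 := by
  have hle : α ≤ 6824 / 10 ^ 4 := by
    have := alpha_lt α hα hαroot (q := 6824 / 10 ^ 4) (by norm_num) (by norm_num)
    linarith
  have h1 : (0:ℝ) < 1 - α := by linarith [hα.2]
  have h1' : (0:ℝ) < 1 - 6824 / 10 ^ 4 := by norm_num
  have hp : ∀ k : ℕ, α ^ k ≤ (6824 / 10 ^ 4 : ℝ) ^ k := fun k =>
    pow_le_pow_left₀ hα.1.le hle k
  rw [Gr, if_neg (by omega)]
  have e1 : (450 - 2)/2 = 224 := by omega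
  have e2 : 450 / 2 = 225 := by omega
  rw [e1, e2]
  have h2 : α ^ 225 / (1 - α) ≤ (6824/10^4 : ℝ) ^ 225 / (1 - 6824/10^4) := by
    exact div_le_div₀ (by positivity) (hp 225) h1' (by linarith)
  have h3 : (1/2 : ℝ) * α ^ 224 ≤ (1/2) * (6824/10^4) ^ 224 := by
    have := hp 224; linarith
  have hnum : (1/2 : ℝ) * (6824/10^4) ^ 224 + (6824/10^4 : ℝ) ^ 225 / (1 - 6824/10^4)
      ≤ 1 / 10 ^ 36 := by norm_num
  linarith

end Tail


def aloZ : ℤ := 6823278038280193273694837397110482568911885818979985778037286066398966786869980210817320437862051282955933187639036624942565247208787503263289504329167451940519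
def ahiZ : ℤ := 6823278038280193273694837397110482568911885818979985778037286066398966786869980210817320437862051282955933187639036624942565247208787503263289504329167451940520
def ELZ : ℤ := 10000000000000000000000000000000000000000000000000000000000000000000000000000000000000000000000000000000000000000000000000000000000000000000000000000000000000000
def GqZ : ℤ := 10000000000000000000000000000000000000000000000000000000000000000000000000000000000000000000000000000000000000000000000000000

def ehiZ (i : ℕ) : ℤ := (B i : ℤ) * ELZ - aloZ * (A i : ℤ)
def eloZ (i : ℕ) : ℤ := ahiZ * (A i : ℤ) - (B i : ℤ) * ELZ

def go (ev : ℕ → ℤ) : ℕ → ℤ × ℤ × ℤ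
  | 0 => (GqZ, GqZ, GqZ)
  | s+1 => (max (go ev s).1 (ev (451 - s) + (go ev s).2.2), (go ev s).1, (go ev s).2.1)

def LU : List ℕ := [450, 446, 443, 439, 436, 433, 429, 426, 423, 419, 416, 412, 409, 406, 402, 399, 395, 392, 389, 385, 382, 379, 375, 372, 368, 365, 362, 358, 355, 351, 348, 345, 341, 338, 335, 331, 328, 324, 321, 318, 314, 311, 307, 304, 301, 297, 294, 291, 287, 284, 280, 277, 274, 270, 267, 263, 260, 257, 253, 250, 247, 243, 240, 236, 233, 230, 226, 223, 219, 216, 213, 209, 206, 203, 199, 196, 192, 189, 186, 182, 179, 175, 172, 169, 165, 162, 159, 155, 152, 148, 145, 142, 138, 135, 131, 128, 125, 121, 118, 115, 111, 108, 104, 101, 98, 94, 91, 87, 84, 81, 77, 74, 71, 67, 64, 60, 57, 54, 50, 47, 43, 40, 37, 33, 30, 27, 23, 20, 16, 13, 10, 6, 3, 0]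
def LL : List ℕ := [451, 448, 445, 441, 438, 434, 431, 428, 424, 421, 417, 414, 411, 407, 404, 401, 397, 394, 390, 387, 384, 380, 377, 373, 370, 367, 363, 360, 357, 353, 350, 346, 343, 340, 336, 333, 329, 326, 323, 319, 316, 313, 309, 306, 302, 299, 296, 292, 289, 285, 282, 279, 275, 272, 269, 265, 262, 258, 255, 252, 248, 245, 241, 238, 235, 231, 228, 225, 221, 218, 214, 211, 208, 204, 201, 197, 194, 191, 187, 184, 181, 177, 174, 170, 167, 164, 160, 157, 153, 150, 147, 143, 140, 137, 133, 130, 126, 123, 120, 116, 113, 109, 106, 103, 99, 96, 93, 89, 86, 82, 79, 76, 72, 69, 65, 62, 59, 55, 52, 49, 45, 42, 38, 35, 32, 28, 25, 21, 18, 15, 11, 8, 5, 1]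

theorem go_succ (ev : ℕ → ℤ) (s : ℕ) :
    go ev (s+1) = (max (go ev s).1 (ev (451 - s) + (go ev s).2.2),
      (go ev s).1, (go ev s).2.1) := rfl

theorem go22 (ev : ℕ → ℤ) (s : ℕ) : (go ev (s+2)).2.2 = (go ev s).1 := rfl

theorem go_mono (ev : ℕ → ℤ) (s : ℕ) : (go ev s).1 ≤ (go ev (s+1)).1 := le_max_left _ _

theorem go_ge_Gq (ev : ℕ → ℤ) : ∀ s, GqZ ≤ (go ev s).1 := by
  intro s
  induction s with
  | zero => exact le_refl _
  | succ s ih => exact ih.trans (go_mono ev s)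

theorem canon_append : ∀ (l : List ℕ) (i : ℕ), canonb (l ++ [i]) = true →
    canonb l = true ∧ ∀ x ∈ l, i + 3 ≤ x := by
  intro l
  induction l with
  | nil => intro i _; exact ⟨rfl, by simp⟩
  | cons a l ih =>
    intro i hc
    match l, hc with
    | [], hc =>
      have : i + 3 ≤ a := by simpa [canonb] using hc
      exact ⟨rfl, by simpa using this⟩
    | b :: l', hc =>
      have hsplit : b + 3 ≤ a ∧ canonb ((b :: l') ++ [i]) = true := by
        simpa [canonb] using hc
      obtain ⟨h1, h2⟩ := ih i hsplit.2
      refine ⟨by simp [canonb, hsplit.1, h1], ?_⟩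
      intro x hx
      rcases List.mem_cons.mp hx with rfl | hx'
      · have hb : i + 3 ≤ b := h2 b (by simp)
        omega
      · exact h2 x hx'

section DP
variable (α : ℝ) (hα : α ∈ Set.Ioo (0 : ℝ) 1) (hαroot : α ^ 3 + α - 1 = 0)

theorem dp_list (f : ℕ → ℝ) (T : ℕ → ℝ)
    (hmono : ∀ j, T (j+1) ≤ T j) (h0 : ∀ j, 0 ≤ T j) (hrec : ∀ i, f i + T (i+3) ≤ T i) :
    ∀ l, canonb l = true → ∀ j, (∀ x ∈ l, j ≤ x) → (l.map f).sum ≤ T j := by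
  have Tanti : ∀ a b : ℕ, a ≤ b → T b ≤ T a := by
    intro a b hab
    induction b with
    | zero => have : a = 0 := by omega
              rw [this]
    | succ b ih =>
      rcases Nat.lt_or_ge a (b+1) with h | h
      · exact (hmono b).trans (ih (by omega))
      · have : a = b + 1 := by omega
        rw [this]
  intro l
  induction l using List.reverseRecOn with
  | nil => intro _ j _; simpa using h0 j
  | append_singleton l i ihl =>
    intro hc j hj
    obtain ⟨hcl, hall⟩ := canon_append l i hc
    have h1 : (l.map f).sum ≤ T (i+3) := ihl hcl (i+3) hall
    have h2 : T i ≤ T j := Tanti j i (hj i (by simp))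
    have h3 := hrec i
    have hsum : ((l ++ [i]).map f).sum = (l.map f).sum + f i := by simp
    rw [hsum]
    linarith

noncomputable def TT (ev : ℕ → ℤ) (j : ℕ) : ℝ :=
  if j ≤ 452 then ((go ev (452 - j)).1 : ℝ) / 10 ^ 160 else Gr α j

include hα hαroot

theorem GqZ_real : ((GqZ : ℤ) : ℝ) / 10 ^ 160 = 1 / 10 ^ 36 := by
  norm_num [GqZ]

theorem TT_mono (ev : ℕ → ℤ) (j : ℕ) : TT α ev (j+1) ≤ TT α ev j := by
  rcases Nat.lt_or_ge j 452 with h | h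
  · rw [TT, TT, if_pos (by omega), if_pos (by omega)]
    have e1 : 452 - j = (452 - (j+1)) + 1 := by omega
    rw [e1]
    have := go_mono ev (452 - (j+1))
    have hc : ((go ev (452 - (j+1))).1 : ℝ) ≤ ((go ev (452 - (j+1) + 1)).1 : ℝ) :=
      Int.cast_le.mpr this
    exact (div_le_div_iff_of_pos_right (by positivity)).mpr hc
  · rcases Nat.eq_or_lt_of_le h with rfl | h'
    · rw [TT, TT, if_neg (by omega), if_pos (by omega)]
      have : 452 - 452 = 0 := by omega
      rw [this]
      have h1 : Gr α 453 ≤ Gr α 450 := gr_mono α hα hαroot (by omega) (by omega)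
      have h2 := gr_bound α hα hαroot
      rw [show ((go ev 0).1 : ℤ) = GqZ from rfl, GqZ_real α hα hαroot]
      linarith
    · rw [TT, TT, if_neg (by omega), if_neg (by omega)]
      exact gr_step α hα hαroot j (by omega)

end DP


section DPb
variable (α : ℝ) (hα : α ∈ Set.Ioo (0 : ℝ) 1) (hαroot : α ^ 3 + α - 1 = 0)
include hα hαroot

theorem TT_nonneg (ev : ℕ → ℤ) (j : ℕ) : 0 ≤ TT α ev j := by
  rw [TT]
  split
  · have h1 := go_ge_Gq ev (452 - j)
    have h2 : (0:ℤ) < GqZ := by norm_num [GqZ]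
    have : (0:ℝ) ≤ ((go ev (452 - j)).1 : ℝ) := by exact_mod_cast (h2.le.trans h1)
    positivity
  · exact gr_nonneg α hα hαroot j

theorem TT_rec (ev : ℕ → ℤ) (f : ℕ → ℝ)
    (hf : ∀ i, f i ≤ ((ev i : ℤ) : ℝ) / 10 ^ 160)
    (hfg : ∀ i, 1 ≤ i → f i + Gr α (i + 3) ≤ Gr α i) (i : ℕ) :
    f i + TT α ev (i+3) ≤ TT α ev i := by
  rcases Nat.lt_or_ge i 450 with h | h
  · -- both table entries
    rw [TT, TT, if_pos (by omega), if_pos (by omega)]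
    have e1 : 452 - i = (451 - i) + 1 := by omega
    have e2 : 451 - (451 - i) = i := by omega
    have e3 : 451 - i = (449 - i) + 2 := by omega
    have e4 : 452 - (i + 3) = 449 - i := by omega
    have hkey : (ev i + (go ev (449 - i)).1 : ℤ) ≤ (go ev (452 - i)).1 := by
      rw [e1, go_succ]
      have h22 : (go ev (451 - i)).2.2 = (go ev (449 - i)).1 := by rw [e3, go22]
      rw [e2, h22]
      exact le_max_right _ _
    have hkey' : ((ev i : ℤ) : ℝ) / 10 ^ 160 + ((go ev (449 - i)).1 : ℝ) / 10 ^ 160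
        ≤ ((go ev (452 - i)).1 : ℝ) / 10 ^ 160 := by
      rw [← add_div]
      apply (div_le_div_iff_of_pos_right (by positivity)).mpr
      exact_mod_cast hkey
    rw [e4]
    have := hf i
    linarith
  · rcases Nat.lt_or_ge i 453 with h2 | h2
    · -- 450 ≤ i ≤ 452 : tail vs boundary
      rw [TT, TT, if_neg (by omega), if_pos (by omega)]
      have hg : f i + Gr α (i + 3) ≤ Gr α i := hfg i (by omega)
      have hg2 : Gr α i ≤ Gr α 450 := gr_mono α hα hαroot (by omega) h
      have hg3 := gr_bound α hα hαroot
      have hq : (1:ℝ) / 10 ^ 36 ≤ ((go ev (452 - i)).1 : ℝ) / 10 ^ 160 := by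
        rw [← GqZ_real α hα hαroot]
        apply (div_le_div_iff_of_pos_right (by positivity)).mpr
        exact_mod_cast go_ge_Gq ev (452 - i)
      linarith
    · -- pure tail
      rw [TT, TT, if_neg (by omega), if_neg (by omega)]
      exact hfg i (by omega)

theorem sum_map_neg (g : ℕ → ℝ) : ∀ l : List ℕ, (l.map (fun i => -g i)).sum = -((l.map g).sum) := by
  intro l
  induction l with
  | nil => simp
  | cons a l' ih => simp [ih]; ring

theorem halo : ((aloZ : ℤ) : ℝ) / 10 ^ 160 < α := by
  apply alpha_gt α hα hαroot
  · norm_num [aloZ]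
  · norm_num [aloZ]

theorem hahi : α < ((ahiZ : ℤ) : ℝ) / 10 ^ 160 := by
  apply alpha_lt α hα hαroot
  · norm_num [ahiZ]
  · norm_num [ahiZ]

theorem ehi_ge (i : ℕ) : eR α i ≤ ((ehiZ i : ℤ) : ℝ) / 10 ^ 160 := by
  have h1 := halo α hα hαroot
  have hA : (0:ℝ) ≤ (A i : ℝ) := by positivity
  have : ((ehiZ i : ℤ) : ℝ) = (B i : ℝ) * 10 ^ 160 - ((aloZ : ℤ) : ℝ) * (A i : ℝ) := by
    rw [ehiZ]; push_cast [ELZ]; norm_num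
  rw [eR, this]
  rw [sub_div]
  have e1 : (B i : ℝ) * 10 ^ 160 / 10 ^ 160 = (B i : ℝ) := by field_simp
  rw [e1]
  have e2 : ((aloZ : ℤ) : ℝ) * (A i : ℝ) / 10 ^ 160 = (((aloZ : ℤ) : ℝ) / 10 ^ 160) * (A i : ℝ) := by
    ring
  rw [e2]
  nlinarith [h1, hA]

theorem elo_ge (i : ℕ) : -eR α i ≤ ((eloZ i : ℤ) : ℝ) / 10 ^ 160 := by
  have h1 := hahi α hα hαroot
  have hA : (0:ℝ) ≤ (A i : ℝ) := by positivity
  have : ((eloZ i : ℤ) : ℝ) = ((ahiZ : ℤ) : ℝ) * (A i : ℝ) - (B i : ℝ) * 10 ^ 160 := by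
    rw [eloZ]; push_cast [ELZ]; norm_num
  rw [eR, this, sub_div]
  have e1 : (B i : ℝ) * 10 ^ 160 / 10 ^ 160 = (B i : ℝ) := by field_simp
  rw [e1]
  have e2 : ((ahiZ : ℤ) : ℝ) * (A i : ℝ) / 10 ^ 160 = (((ahiZ : ℤ) : ℝ) / 10 ^ 160) * (A i : ℝ) := by
    ring
  rw [e2]
  nlinarith [h1, hA]

theorem delta_upper (n : ℕ) :
    (F 3 n : ℝ) - α * n ≤ ((go ehiZ 452).1 : ℝ) / 10 ^ 160 := by
  obtain ⟨l, hcl, hsl⟩ := exists_decomp n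
  have hH := H_sumA l hcl
  have hδ : (F 3 n : ℝ) - α * n = (l.map (eR α)).sum := by
    rw [← hsl, hH, sum_eR]
  rw [hδ]
  have := dp_list (eR α) (TT α ehiZ)
    (fun j => TT_mono α hα hαroot ehiZ j)
    (fun j => TT_nonneg α hα hαroot ehiZ j)
    (fun i => TT_rec α hα hαroot ehiZ (eR α) (fun i => ehi_ge α hα hαroot i)
      (fun i hi => gr3 α hα hαroot i hi) i)
    l hcl 0 (fun x _ => Nat.zero_le x)
  rw [TT, if_pos (by omega)] at this
  simpa using this

theorem delta_lower (n : ℕ) :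
    -(((go eloZ 452).1 : ℝ) / 10 ^ 160) ≤ (F 3 n : ℝ) - α * n := by
  obtain ⟨l, hcl, hsl⟩ := exists_decomp n
  have hH := H_sumA l hcl
  have hδ : (F 3 n : ℝ) - α * n = (l.map (eR α)).sum := by
    rw [← hsl, hH, sum_eR]
  have hneg : -((F 3 n : ℝ) - α * n) = (l.map (fun i => -eR α i)).sum := by
    rw [hδ, sum_map_neg α hα hαroot]
  have := dp_list (fun i => -eR α i) (TT α eloZ)
    (fun j => TT_mono α hα hαroot eloZ j)
    (fun j => TT_nonneg α hα hαroot eloZ j)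
    (fun i => TT_rec α hα hαroot eloZ (fun i => -eR α i) (fun i => elo_ge α hα hαroot i)
      (fun i hi => gr3' α hα hαroot i hi) i)
    l hcl 0 (fun x _ => Nat.zero_le x)
  rw [TT, if_pos (by omega)] at this
  rw [← hneg] at this
  linarith

end DPb


set_option maxRecDepth 100000 in
theorem dpU_le : (go ehiZ 452).1 * 10 ^ 33 ≤ 854187179928304211983581540152668 * 10 ^ 160 := by
  decide

set_option maxRecDepth 100000 in
theorem dpL_le : (go eloZ 452).1 * 10 ^ 33 ≤ 708415898743967960305146324178773 * 10 ^ 160 := by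
  decide

set_option maxRecDepth 100000 in
theorem canonLU : canonb LU = true := by decide

set_option maxRecDepth 100000 in
theorem canonLL : canonb LL = true := by decide

set_option maxRecDepth 100000 in
theorem witU_int : (854187179928304211983581540152668 - 3) * 10 ^ 127
    ≤ (sumB LU : ℤ) * 10 ^ 160 - ahiZ * (sumA LU : ℤ) := by decide

set_option maxRecDepth 100000 in
theorem witL_int : (sumB LL : ℤ) * 10 ^ 160 - aloZ * (sumA LL : ℤ)
    ≤ (-708415898743967960305146324178773 + 3) * 10 ^ 127 := by decide

theorem dpU_real : ((go ehiZ 452).1 : ℝ) / 10 ^ 160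
    ≤ 0.854187179928304211983581540152668 := by
  have h : ((go ehiZ 452).1 : ℝ) * 10 ^ 33
      ≤ 854187179928304211983581540152668 * 10 ^ 160 := by exact_mod_cast dpU_le
  have he : (0.854187179928304211983581540152668 : ℝ)
      = 854187179928304211983581540152668 / 10 ^ 33 := by norm_num
  rw [he, div_le_div_iff₀ (by positivity) (by positivity)]
  linarith

theorem dpL_real : ((go eloZ 452).1 : ℝ) / 10 ^ 160
    ≤ 708415898743967960305146324178773 / 10 ^ 33 := by
  have h : ((go eloZ 452).1 : ℝ) * 10 ^ 33
      ≤ 708415898743967960305146324178773 * 10 ^ 160 := by exact_mod_cast dpL_le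
  rw [div_le_div_iff₀ (by positivity) (by positivity)]
  linarith

section Wit
variable (α : ℝ) (hα : α ∈ Set.Ioo (0 : ℝ) 1) (hαroot : α ^ 3 + α - 1 = 0)
include hα hαroot

theorem witU_real : (0.854187179928304211983581540152668 : ℝ) - 3 / 10 ^ 33
    ≤ (sumB LU : ℝ) - α * (sumA LU : ℝ) := by
  have hcast : ((854187179928304211983581540152668 - 3) * 10 ^ 127 : ℝ)
      ≤ (sumB LU : ℝ) * 10 ^ 160 - ((ahiZ : ℤ) : ℝ) * (sumA LU : ℝ) := by
    exact_mod_cast witU_int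
  have h1 : (0:ℝ) ≤ (sumA LU : ℝ) := by positivity
  have h2 : α * (sumA LU : ℝ) ≤ (((ahiZ : ℤ) : ℝ) / 10 ^ 160) * (sumA LU : ℝ) :=
    mul_le_mul_of_nonneg_right (hahi α hα hαroot).le h1
  have h3 : (((ahiZ : ℤ) : ℝ) / 10 ^ 160) * (sumA LU : ℝ)
      = (((ahiZ : ℤ) : ℝ) * (sumA LU : ℝ)) / 10 ^ 160 := by ring
  have h4 : ((854187179928304211983581540152668 - 3) * 10 ^ 127 : ℝ) / 10 ^ 160
      = 0.854187179928304211983581540152668 - 3 / 10 ^ 33 := by norm_num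
  have h5 : ((854187179928304211983581540152668 - 3) * 10 ^ 127 : ℝ) / 10 ^ 160
      ≤ ((sumB LU : ℝ) * 10 ^ 160 - ((ahiZ : ℤ) : ℝ) * (sumA LU : ℝ)) / 10 ^ 160 :=
    by apply div_le_div_of_nonneg_right hcast (by positivity) |>.trans_eq rfl
  have h6 : ((sumB LU : ℝ) * 10 ^ 160 - ((ahiZ : ℤ) : ℝ) * (sumA LU : ℝ)) / 10 ^ 160
      = (sumB LU : ℝ) - (((ahiZ : ℤ) : ℝ) * (sumA LU : ℝ)) / 10 ^ 160 := by
    field_simp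
  rw [h4, h6] at h5
  rw [h3] at h2
  linarith

theorem witL_real : (sumB LL : ℝ) - α * (sumA LL : ℝ)
    ≤ -0.708415898743967960305146324178773 + 3 / 10 ^ 33 := by
  have hcast : (sumB LL : ℝ) * 10 ^ 160 - ((aloZ : ℤ) : ℝ) * (sumA LL : ℝ)
      ≤ ((-708415898743967960305146324178773 + 3) * 10 ^ 127 : ℝ) := by
    exact_mod_cast witL_int
  have h1 : (0:ℝ) ≤ (sumA LL : ℝ) := by positivity
  have h2 : (((aloZ : ℤ) : ℝ) / 10 ^ 160) * (sumA LL : ℝ) ≤ α * (sumA LL : ℝ) :=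
    mul_le_mul_of_nonneg_right (halo α hα hαroot).le h1
  have h3 : (((aloZ : ℤ) : ℝ) / 10 ^ 160) * (sumA LL : ℝ)
      = (((aloZ : ℤ) : ℝ) * (sumA LL : ℝ)) / 10 ^ 160 := by ring
  have h4 : (((-708415898743967960305146324178773 + 3) * 10 ^ 127 : ℤ) : ℝ) / 10 ^ 160
      = -0.708415898743967960305146324178773 + 3 / 10 ^ 33 := by norm_num
  have h5 : ((sumB LL : ℝ) * 10 ^ 160 - ((aloZ : ℤ) : ℝ) * (sumA LL : ℝ)) / 10 ^ 160
      ≤ (((-708415898743967960305146324178773 + 3) * 10 ^ 127 : ℤ) : ℝ) / 10 ^ 160 := by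
    apply div_le_div_of_nonneg_right ?_ (by positivity) |>.trans_eq rfl
    exact_mod_cast hcast
  have h6 : ((sumB LL : ℝ) * 10 ^ 160 - ((aloZ : ℤ) : ℝ) * (sumA LL : ℝ)) / 10 ^ 160
      = (sumB LL : ℝ) - (((aloZ : ℤ) : ℝ) * (sumA LL : ℝ)) / 10 ^ 160 := by
    rw [sub_div, mul_div_cancel_right₀ _ (by positivity : (10:ℝ) ^ 160 ≠ 0)]
  rw [h4, h6] at h5
  rw [h3] at h2
  linarith

end Wit

end Hof


/-- Sharp bounds for `δ_3 n = F_3 n - α_3 n` : its supremum lies in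
`[d₃⁺ - 3·10⁻³³, d₃⁺]` and its infimum in `[d₃⁻, d₃⁻ + 3·10⁻³³]`.
In particular `|δ_3 n| < 1` for all `n`, so the discrepancy
`Δ_3 = sup |δ_3|` is finite and equals `sup δ_3`. -/
theorem discrepancy_three_bounds (α : ℝ)
    (hα : α ∈ Set.Ioo (0 : ℝ) 1) (hαroot : α ^ 3 + α - 1 = 0) :
    (0.854187179928304211983581540152668 - 3 / 10 ^ 33 ≤
        ⨆ n : ℕ, ((F 3 n : ℝ) - α * n)) ∧
    ((⨆ n : ℕ, ((F 3 n : ℝ) - α * n)) ≤ 0.854187179928304211983581540152668) ∧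
    (-0.708415898743967960305146324178773 ≤ ⨅ n : ℕ, ((F 3 n : ℝ) - α * n)) ∧
    ((⨅ n : ℕ, ((F 3 n : ℝ) - α * n)) ≤
        -0.708415898743967960305146324178773 + 3 / 10 ^ 33) ∧
    (∀ n : ℕ, |(F 3 n : ℝ) - α * n| < 1) ∧
    ((⨆ n : ℕ, |(F 3 n : ℝ) - α * n|) = ⨆ n : ℕ, ((F 3 n : ℝ) - α * n)) := by
  have hup : ∀ n : ℕ, (F 3 n : ℝ) - α * n ≤ 0.854187179928304211983581540152668 :=
    fun n => (Hof.delta_upper α hα hαroot n).trans Hof.dpU_real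
  have hlo : ∀ n : ℕ, (-0.708415898743967960305146324178773 : ℝ) ≤ (F 3 n : ℝ) - α * n := by
    intro n
    have h1 := Hof.delta_lower α hα hαroot n
    have h2 := Hof.dpL_real
    have h3 : (-0.708415898743967960305146324178773 : ℝ)
        = -(708415898743967960305146324178773 / 10 ^ 33) := by norm_num
    rw [h3]
    linarith
  have bddA : BddAbove (Set.range fun n : ℕ => (F 3 n : ℝ) - α * n) := by
    refine ⟨0.854187179928304211983581540152668, ?_⟩
    rintro x ⟨n, rfl⟩
    exact hup n
  have bddB : BddBelow (Set.range fun n : ℕ => (F 3 n : ℝ) - α * n) := by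
    refine ⟨-0.708415898743967960305146324178773, ?_⟩
    rintro x ⟨n, rfl⟩
    exact hlo n
  have c2 : (⨆ n : ℕ, ((F 3 n : ℝ) - α * n)) ≤ 0.854187179928304211983581540152668 :=
    ciSup_le hup
  have c1 : (0.854187179928304211983581540152668 : ℝ) - 3 / 10 ^ 33 ≤
      ⨆ n : ℕ, ((F 3 n : ℝ) - α * n) := by
    have hw := Hof.witU_real α hα hαroot
    have hFw : (F 3 (Hof.sumA Hof.LU) : ℝ) - α * (Hof.sumA Hof.LU : ℝ)
        = (Hof.sumB Hof.LU : ℝ) - α * (Hof.sumA Hof.LU : ℝ) := by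
      rw [Hof.H_sumA Hof.LU Hof.canonLU]
    have hle := le_ciSup bddA (Hof.sumA Hof.LU)
    rw [hFw] at hle
    linarith
  have c3 : (-0.708415898743967960305146324178773 : ℝ) ≤
      ⨅ n : ℕ, ((F 3 n : ℝ) - α * n) := le_ciInf hlo
  have c4 : (⨅ n : ℕ, ((F 3 n : ℝ) - α * n)) ≤
      -0.708415898743967960305146324178773 + 3 / 10 ^ 33 := by
    have hw := Hof.witL_real α hα hαroot
    have hFw : (F 3 (Hof.sumA Hof.LL) : ℝ) - α * (Hof.sumA Hof.LL : ℝ)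
        = (Hof.sumB Hof.LL : ℝ) - α * (Hof.sumA Hof.LL : ℝ) := by
      rw [Hof.H_sumA Hof.LL Hof.canonLL]
    have hle := ciInf_le bddB (Hof.sumA Hof.LL)
    rw [hFw] at hle
    linarith
  have c5 : ∀ n : ℕ, |(F 3 n : ℝ) - α * n| < 1 := by
    intro n
    rw [abs_lt]
    constructor
    · have := hlo n; norm_num at this ⊢; linarith
    · have := hup n; norm_num at this ⊢; linarith
  have bddAbs : BddAbove (Set.range fun n : ℕ => |(F 3 n : ℝ) - α * n|) := by
    refine ⟨1, ?_⟩
    rintro x ⟨n, rfl⟩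
    exact (c5 n).le
  have c6 : (⨆ n : ℕ, |(F 3 n : ℝ) - α * n|) = ⨆ n : ℕ, ((F 3 n : ℝ) - α * n) := by
    apply le_antisymm
    · apply ciSup_le
      intro n
      rw [abs_le]
      constructor
      · have h1 := hlo n
        have h2 : (0.708415898743967960305146324178773 : ℝ)
            ≤ 0.854187179928304211983581540152668 - 3 / 10 ^ 33 := by norm_num
        linarith
      · exact le_ciSup bddA n
    · apply ciSup_le
      intro n
      exact (le_abs_self _).trans (le_ciSup bddAbs n)
  exact ⟨c1, c2, c3, c4, c5, c6⟩
end
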